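/- Let g be a positive integer, let τ be a symmetric g×g complex matrix whose imaginary part is positive definite, and let (λ_ε)_{ε ∈ {0,1}^g} be complex scalars. Then the following are equivalent: (i) the function (U,V,W,c,d) ↦ ∑_{ε ∈ {0,1}^g} λ_ε · F[ε](U,V,W,c,d) is independent of c and d (its value is unchanged when c and d vary with U, V, W fixed); (ii) ∑_{ε} λ_ε · Q[ε] = 0 (as a g×g matrix) and ∑_{ε} λ_ε · θ̂[ε](0) = 0. Moreover, when these conditions hold, ∑_{ε} λ_ε · F[ε](U,V,W,c,d) = ∑_{ε} λ_ε · ∂_U⁴θ̂[ε](0) for all U, V, W, c, d; in particular the combination is also independent of V and W and is a quartic polynomial in U alone. -/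

import Mathlib

open Complex

/-- The second-order theta function `θ̂[ε](z)`. -/
noncomputable def thetaHat {g : ℕ} (τ : Matrix (Fin g) (Fin g) ℂ)
    (ε : Fin g → ℤ) (z : Fin g → ℂ) : ℂ :=
  ∑' n : Fin g → ℤ,
    Complex.exp (2 * (Real.pi : ℂ) * Complex.I *
        (∑ i, ∑ j, ((n i : ℂ) + (ε i : ℂ) / 2) * τ i j * ((n j : ℂ) + (ε j : ℂ) / 2))
      + 2 * (Real.pi : ℂ) * Complex.I * ∑ i, ((n i : ℂ) + (ε i : ℂ) / 2) * z i)

/-- The directional derivative operator `∂_U = u₁ ∂/∂z₁ + ⋯ + u_g ∂/∂z_g`. -/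
noncomputable def dd {g : ℕ} (U : Fin g → ℂ) (f : (Fin g → ℂ) → ℂ)
    (z : Fin g → ℂ) : ℂ :=
  fderiv ℂ f z U

/-- The Dubrovin quartic `F[ε](U,V,W,c,d)`. -/
noncomputable def dubrovinQuartic {g : ℕ} (τ : Matrix (Fin g) (Fin g) ℂ)
    (ε : Fin g → ℤ) (U V W : Fin g → ℂ) (c d : ℂ) : ℂ :=
  (dd U)^[4] (thetaHat τ ε) 0 - dd U (dd W (thetaHat τ ε)) 0
    + (3 / 2) * c * (dd U)^[2] (thetaHat τ ε) 0
    + (3 / 4) * (dd V)^[2] (thetaHat τ ε) 0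
    + d * thetaHat τ ε 0

/-- The Hessian matrix `Q[ε] = (∂²θ̂[ε]/∂z_i∂z_j(0))_{i,j}` of `θ̂[ε]` at `0`. -/
noncomputable def hessQ {g : ℕ} (τ : Matrix (Fin g) (Fin g) ℂ)
    (ε : Fin g → ℤ) (i j : Fin g) : ℂ :=
  dd (Pi.single i 1) (dd (Pi.single j 1) (thetaHat τ ε)) 0


set_option maxHeartbeats 1000000

open Finset

namespace DubAux

variable {g : ℕ}


lemma summable_exp_neg_abs_int : Summable fun j : ℤ => Real.exp (-‖(j : ℝ)‖) := by
  have hgeo : Summable fun n : ℕ => (Real.exp (-1)) ^ n :=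
    summable_geometric_of_lt_one (le_of_lt (Real.exp_pos _)) (by
      rw [Real.exp_lt_one_iff]; norm_num)
  apply Summable.of_nat_of_neg
  · apply hgeo.congr
    intro n
    rw [← Real.exp_nat_mul]
    congr 1
    rw [Int.cast_natCast, Real.norm_eq_abs, _root_.abs_of_nonneg (Nat.cast_nonneg n)]
    ring
  · apply hgeo.congr
    intro n
    rw [← Real.exp_nat_mul]
    congr 1
    rw [Real.norm_eq_abs]
    push_cast
    rw [abs_neg, _root_.abs_of_nonneg (Nat.cast_nonneg n)]
    ring

lemma summable_pi_prod (v : ℤ → ℝ) (h0 : ∀ j, 0 ≤ v j) (hv : Summable v) :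
    ∀ g : ℕ, Summable fun n : Fin g → ℤ => ∏ i, v (n i) := by
  intro g
  induction g with
  | zero => exact .of_finite
  | succ g ih =>
    rw [← (Fin.consEquiv (fun _ : Fin (g+1) => ℤ)).summable_iff]
    have heq : ((fun n : Fin (g+1) → ℤ => ∏ i, v (n i)) ∘ (Fin.consEquiv (fun _ : Fin (g+1) => ℤ)))
        = fun p : ℤ × (Fin g → ℤ) => v p.1 * ∏ i, v (p.2 i) := by
      funext p
      simp only [Function.comp_apply, Fin.consEquiv_apply]
      show ∏ i, (v ∘ Fin.cons p.1 p.2) i = _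
      rw [Fin.comp_cons, Fin.prod_cons]
      rfl
    rw [heq]
    have h1 : (0:ℤ → ℝ) ≤ v := fun j => h0 j
    have h2 : (0:(Fin g → ℤ) → ℝ) ≤ fun n => ∏ i, v (n i) :=
      fun n => Finset.prod_nonneg fun i _ => h0 _
    have := Summable.mul_of_nonneg hv ih h1 h2
    exact this





/-- real vector `n + ε/2` -/
noncomputable def rv (ε : Fin g → ℤ) (n : Fin g → ℤ) : Fin g → ℝ :=
  fun i => (n i : ℝ) + (ε i : ℝ) / 2

/-- complex version -/
noncomputable def mv (ε : Fin g → ℤ) (n : Fin g → ℤ) (i : Fin g) : ℂ :=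
  ((rv ε n i : ℝ) : ℂ)

lemma mv_eq (ε : Fin g → ℤ) (n : Fin g → ℤ) (i : Fin g) :
    mv ε n i = (n i : ℂ) + (ε i : ℂ) / 2 := by
  rw [mv, rv]
  push_cast
  ring

/-- quadratic exponent -/
noncomputable def qA (τ : Matrix (Fin g) (Fin g) ℂ) (ε : Fin g → ℤ) (n : Fin g → ℤ) : ℂ :=
  2 * (Real.pi : ℂ) * Complex.I * ∑ i, ∑ j, mv ε n i * τ i j * mv ε n j

/-- linear exponent -/
noncomputable def bL (ε : Fin g → ℤ) (n : Fin g → ℤ) (z : Fin g → ℂ) : ℂ :=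
  2 * (Real.pi : ℂ) * Complex.I * ∑ i, mv ε n i * z i

/-- general term -/
noncomputable def fT (τ : Matrix (Fin g) (Fin g) ℂ) (ε : Fin g → ℤ)
    (p : (Fin g → ℤ) → ℂ) (n : Fin g → ℤ) (z : Fin g → ℂ) : ℂ :=
  p n * Complex.exp (qA τ ε n + bL ε n z)

noncomputable def G (τ : Matrix (Fin g) (Fin g) ℂ) (ε : Fin g → ℤ)
    (p : (Fin g → ℤ) → ℂ) (z : Fin g → ℂ) : ℂ :=
  ∑' n, fT τ ε p n z

lemma thetaHat_eq (τ : Matrix (Fin g) (Fin g) ℂ) (ε : Fin g → ℤ) (z : Fin g → ℂ) :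
    (∑' n : Fin g → ℤ,
      Complex.exp (2 * (Real.pi : ℂ) * Complex.I *
          (∑ i, ∑ j, ((n i : ℂ) + (ε i : ℂ) / 2) * τ i j * ((n j : ℂ) + (ε j : ℂ) / 2))
        + 2 * (Real.pi : ℂ) * Complex.I * ∑ i, ((n i : ℂ) + (ε i : ℂ) / 2) * z i))
      = G τ ε (fun _ => 1) z := by
  apply tsum_congr
  intro n
  rw [fT, one_mul, qA, bL]
  simp only [mv_eq]

/-- the linear functional as CLM -/
noncomputable def Lc (ε : Fin g → ℤ) (n : Fin g → ℤ) : (Fin g → ℂ) →L[ℂ] ℂ :=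
  ∑ i, (2 * (Real.pi : ℂ) * Complex.I * mv ε n i) • (ContinuousLinearMap.proj i)

lemma Lc_apply (ε : Fin g → ℤ) (n : Fin g → ℤ) (z : Fin g → ℂ) :
    Lc ε n z = bL ε n z := by
  rw [Lc, bL]
  simp only [ContinuousLinearMap.sum_apply, ContinuousLinearMap.smul_apply,
    ContinuousLinearMap.proj_apply, smul_eq_mul]
  rw [Finset.mul_sum]
  exact Finset.sum_congr rfl fun i _ => by ring

lemma norm_bL_le (ε : Fin g → ℤ) (n : Fin g → ℤ) (z : Fin g → ℂ) :
    ‖bL ε n z‖ ≤ 2 * Real.pi * g * ‖rv ε n‖ * ‖z‖ := by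
  rw [bL]
  rw [norm_mul]
  have h1 : ‖2 * (Real.pi : ℂ) * Complex.I‖ = 2 * Real.pi := by
    simp [norm_mul]
    exact Real.pi_nonneg
  rw [h1]
  have h2 : ‖∑ i, mv ε n i * z i‖ ≤ ∑ i : Fin g, ‖rv ε n‖ * ‖z‖ := by
    refine (norm_sum_le _ _).trans (Finset.sum_le_sum fun i _ => ?_)
    rw [norm_mul]
    have : ‖mv ε n i‖ = ‖rv ε n i‖ := by rw [mv, Complex.norm_real]
    rw [this]
    exact mul_le_mul (norm_le_pi_norm _ i) (norm_le_pi_norm _ i) (norm_nonneg _)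
      (norm_nonneg _)
  rw [Finset.sum_const, Finset.card_univ, Fintype.card_fin, nsmul_eq_mul] at h2
  calc 2 * Real.pi * ‖∑ i, mv ε n i * z i‖ ≤ 2 * Real.pi * ((g : ℝ) * (‖rv ε n‖ * ‖z‖)) :=
        mul_le_mul_of_nonneg_left h2 (by positivity)
    _ = 2 * Real.pi * g * ‖rv ε n‖ * ‖z‖ := by ring

lemma norm_Lc_le (ε : Fin g → ℤ) (n : Fin g → ℤ) :
    ‖Lc ε n‖ ≤ 2 * Real.pi * g * ‖rv ε n‖ := by
  apply ContinuousLinearMap.opNorm_le_bound _ (by positivity)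
  intro z
  rw [Lc_apply]
  exact norm_bL_le ε n z





/-- Uniform lower bound for a positive definite real quadratic form. -/
lemma posdef_bound (hg : 0 < g) (M : Matrix (Fin g) (Fin g) ℝ) (hM : M.PosDef) :
    ∃ c₀ > 0, ∀ x : Fin g → ℝ, c₀ * ‖x‖ ^ 2 ≤ ∑ i, ∑ j, x i * M i j * x j := by
  set Qf : (Fin g → ℝ) → ℝ := fun x => ∑ i, ∑ j, x i * M i j * x j with hQf
  have hQpos : ∀ x : Fin g → ℝ, x ≠ 0 → 0 < Qf x := by
    intro x hx
    have : (0:ℝ) < dotProduct (star x) (M.mulVec x) := hM.dotProduct_mulVec_pos hx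
    convert this using 1
    show ∑ i, ∑ j, x i * M i j * x j = _
    simp only [dotProduct, Matrix.mulVec, Pi.star_apply, star_trivial]
    refine Finset.sum_congr rfl fun i _ => ?_
    rw [Finset.mul_sum]
    refine Finset.sum_congr rfl fun j _ => ?_
    ring
  have hcont : Continuous Qf := by
    apply continuous_finset_sum
    intro i _
    apply continuous_finset_sum
    intro j _
    exact ((continuous_apply i).mul continuous_const).mul (continuous_apply j)
  have hscale : ∀ (c : ℝ) (x : Fin g → ℝ), Qf (c • x) = c ^ 2 * Qf x := by
    intro c x
    simp only [hQf, Pi.smul_apply, smul_eq_mul, Finset.mul_sum]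
    exact Finset.sum_congr rfl fun i _ => Finset.sum_congr rfl fun j _ => by ring
  haveI : Nonempty (Fin g) := ⟨⟨0, hg⟩⟩
  have hsne : (Metric.sphere (0 : Fin g → ℝ) 1).Nonempty :=
    NormedSpace.sphere_nonempty.mpr zero_le_one
  obtain ⟨x₀, hx₀s, hx₀min'⟩ :=
    (isCompact_sphere (0 : Fin g → ℝ) 1).exists_isMinOn hsne hcont.continuousOn
  have hx₀min : ∀ y ∈ Metric.sphere (0 : Fin g → ℝ) 1, Qf x₀ ≤ Qf y :=
    fun y hy => hx₀min' hy
  have hx₀norm : ‖x₀‖ = 1 := by simpa using hx₀s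
  have hx₀ne : x₀ ≠ 0 := by
    intro h; rw [h] at hx₀norm; simp at hx₀norm
  refine ⟨Qf x₀, hQpos x₀ hx₀ne, fun x => ?_⟩
  by_cases hx : x = 0
  · subst hx; simp [hQf]
  · have hxn : ‖x‖ ≠ 0 := norm_ne_zero_iff.mpr hx
    set y : Fin g → ℝ := ‖x‖⁻¹ • x with hy
    have hyn : ‖y‖ = 1 := by
      rw [hy, norm_smul, norm_inv, norm_norm, inv_mul_cancel₀ hxn]
    have hys : y ∈ Metric.sphere (0 : Fin g → ℝ) 1 := by
      simpa [dist_eq_norm] using hyn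
    have h1 : Qf x₀ ≤ Qf y := hx₀min y hys
    have hxy : ‖x‖ • y = x := by rw [hy, smul_smul, mul_inv_cancel₀ hxn, one_smul]
    have h2 : Qf x = ‖x‖ ^ 2 * Qf y := by
      conv_lhs => rw [← hxy]
      rw [hscale]
    show Qf x₀ * ‖x‖ ^ 2 ≤ Qf x
    rw [h2]
    calc Qf x₀ * ‖x‖ ^ 2 ≤ Qf y * ‖x‖ ^ 2 :=
          mul_le_mul_of_nonneg_right h1 (by positivity)
      _ = ‖x‖ ^ 2 * Qf y := by ring



/-- The crucial summability lemma over `ℤ^g`. -/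
lemma key1 (ε : Fin g → ℤ) {a : ℝ} (ha : 0 < a) (b : ℝ) (k : ℕ)
    (hpi : Summable fun n : Fin g → ℤ => ∏ i, Real.exp (-‖((n i : ℝ))‖)) :
    Summable fun n : Fin g → ℤ =>
      (1 + ‖rv ε n‖) ^ k * Real.exp (-a * ‖rv ε n‖ ^ 2 + b * ‖rv ε n‖) := by
  set s : ℝ := ∑ i, ‖((ε i : ℝ))‖ / 2 with hs
  have hs0 : 0 ≤ s := Finset.sum_nonneg fun i _ => by positivity
  set d : ℝ := b + g + k with hd
  set K : ℝ := Real.exp (d ^ 2 / (4 * a) + s) with hK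
  have hbound : ∀ n : Fin g → ℤ,
      (1 + ‖rv ε n‖) ^ k * Real.exp (-a * ‖rv ε n‖ ^ 2 + b * ‖rv ε n‖)
        ≤ K * ∏ i, Real.exp (-‖((n i : ℝ))‖) := by
    intro n
    set t : ℝ := ‖rv ε n‖ with ht
    have ht0 : 0 ≤ t := norm_nonneg _
    -- ∑ |n i| ≤ g * t + s
    have hns : ∑ i, ‖((n i : ℝ))‖ ≤ g * t + s := by
      have : ∀ i : Fin g, ‖((n i : ℝ))‖ ≤ t + ‖((ε i : ℝ))‖ / 2 := by
        intro i
        have h1 : ‖rv ε n i‖ ≤ t := norm_le_pi_norm (rv ε n) i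
        have h2 : (n i : ℝ) = rv ε n i - (ε i : ℝ) / 2 := by simp [rv]
        rw [h2]
        calc ‖rv ε n i - (ε i : ℝ) / 2‖ ≤ ‖rv ε n i‖ + ‖(ε i : ℝ) / 2‖ := norm_sub_le _ _
          _ ≤ t + ‖((ε i : ℝ))‖ / 2 := by
              rw [norm_div]
              simp only [Real.norm_ofNat]
              gcongr
        -- done
    -- combine
      calc ∑ i, ‖((n i : ℝ))‖ ≤ ∑ i : Fin g, (t + ‖((ε i : ℝ))‖ / 2) :=
            Finset.sum_le_sum fun i _ => this i
        _ = g * t + s := by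
            rw [Finset.sum_add_distrib, Finset.sum_const, Finset.card_univ, Fintype.card_fin,
              nsmul_eq_mul, hs]
    -- product = exp(-∑|n i|)
    have hprod : ∏ i, Real.exp (-‖((n i : ℝ))‖) = Real.exp (-∑ i, ‖((n i : ℝ))‖) := by
      rw [← Real.exp_sum, Finset.sum_neg_distrib]
    have hexp1 : (1 + t) ^ k ≤ Real.exp (k * t) := by
      calc (1 + t) ^ k ≤ (Real.exp t) ^ k := by
            apply pow_le_pow_left₀ (by positivity)
            rw [add_comm]
            exact Real.add_one_le_exp t
        _ = Real.exp (k * t) := by rw [← Real.exp_nat_mul]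
    have hquad : -a * t ^ 2 + d * t ≤ d ^ 2 / (4 * a) := by
      have h4a : (0:ℝ) < 4 * a := by linarith
      rw [le_div_iff₀ h4a]
      nlinarith [sq_nonneg (2 * a * t - d)]
    calc (1 + t) ^ k * Real.exp (-a * t ^ 2 + b * t)
        ≤ Real.exp (k * t) * Real.exp (-a * t ^ 2 + b * t) := by
          apply mul_le_mul_of_nonneg_right hexp1 (le_of_lt (Real.exp_pos _))
      _ = Real.exp (-a * t ^ 2 + d * t - g * t) := by
          rw [← Real.exp_add]; congr 1; rw [hd]; push_cast; ring
      _ ≤ Real.exp (d ^ 2 / (4 * a) + s - (g * t + s)) := by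
          apply Real.exp_le_exp.mpr
          have := hquad
          linarith
      _ ≤ K * ∏ i, Real.exp (-‖((n i : ℝ))‖) := by
          rw [hprod, hK, ← Real.exp_add]
          apply Real.exp_le_exp.mpr
          linarith [hns]
  apply Summable.of_nonneg_of_le (fun n => by positivity) hbound
  exact hpi.mul_left K




lemma hpi_all (g : ℕ) : Summable fun n : Fin g → ℤ => ∏ i, Real.exp (-‖((n i : ℝ))‖) :=
  summable_pi_prod _ (fun _ => le_of_lt (Real.exp_pos _)) summable_exp_neg_abs_int g

lemma re_qA (τ : Matrix (Fin g) (Fin g) ℂ) (ε : Fin g → ℤ) (n : Fin g → ℤ) :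
    (qA τ ε n).re = -(2 * Real.pi) * ∑ i, ∑ j, rv ε n i * (τ i j).im * rv ε n j := by
  rw [qA]
  have h : 2 * (Real.pi : ℂ) * Complex.I * (∑ i, ∑ j, mv ε n i * τ i j * mv ε n j)
      = ((2 * Real.pi : ℝ) : ℂ) * (Complex.I * (∑ i, ∑ j, mv ε n i * τ i j * mv ε n j)) := by
    push_cast; ring
  rw [h, Complex.re_ofReal_mul, Complex.mul_re, Complex.I_re, Complex.I_im]
  have him : (∑ i, ∑ j, mv ε n i * τ i j * mv ε n j).im
      = ∑ i, ∑ j, rv ε n i * (τ i j).im * rv ε n j := by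
    rw [Complex.im_sum]
    refine Finset.sum_congr rfl fun i _ => ?_
    rw [Complex.im_sum]
    refine Finset.sum_congr rfl fun j _ => ?_
    rw [mv, mv]
    simp [Complex.mul_im]
  rw [him]
  ring




lemma norm_fT_le (τ : Matrix (Fin g) (Fin g) ℂ) (ε : Fin g → ℤ) {a : ℝ}
    (hqa : ∀ n, (qA τ ε n).re ≤ -a * ‖rv ε n‖ ^ 2)
    {p : (Fin g → ℤ) → ℂ} {C : ℝ} {k : ℕ}
    (hp : ∀ n, ‖p n‖ ≤ C * (1 + ‖rv ε n‖) ^ k) (n : Fin g → ℤ) {z : Fin g → ℂ} {R : ℝ}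
    (hz : ‖z‖ ≤ R) :
    ‖fT τ ε p n z‖ ≤ C * ((1 + ‖rv ε n‖) ^ k *
      Real.exp (-a * ‖rv ε n‖ ^ 2 + (2 * Real.pi * g * R) * ‖rv ε n‖)) := by
  set t : ℝ := ‖rv ε n‖ with ht
  have ht0 : 0 ≤ t := norm_nonneg _
  rw [fT, norm_mul, Complex.norm_exp]
  have hre : (qA τ ε n + bL ε n z).re ≤ -a * t ^ 2 + (2 * Real.pi * g * R) * t := by
    rw [Complex.add_re]
    have h1 : (bL ε n z).re ≤ 2 * Real.pi * g * t * R := by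
      calc (bL ε n z).re ≤ ‖bL ε n z‖ := Complex.re_le_norm _
        _ ≤ 2 * Real.pi * g * t * ‖z‖ := norm_bL_le ε n z
        _ ≤ 2 * Real.pi * g * t * R := by
            apply mul_le_mul_of_nonneg_left hz (by positivity)
    have h2 := hqa n
    rw [← ht] at h2
    calc (qA τ ε n).re + (bL ε n z).re ≤ -a * t ^ 2 + 2 * Real.pi * g * t * R :=
          add_le_add h2 h1
      _ = -a * t ^ 2 + (2 * Real.pi * g * R) * t := by ring
  have hC0 : 0 ≤ C := by
    have := (norm_nonneg (p (fun _ => 0))).trans (hp (fun _ => 0))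
    nlinarith [pow_pos (by positivity : (0:ℝ) < 1 + ‖rv ε (fun _ => 0)‖) k]
  calc ‖p n‖ * Real.exp ((qA τ ε n + bL ε n z).re)
      ≤ (C * (1 + t) ^ k) * Real.exp (-a * t ^ 2 + (2 * Real.pi * g * R) * t) := by
        apply mul_le_mul (hp n) (Real.exp_le_exp.mpr hre) (le_of_lt (Real.exp_pos _))
        positivity
    _ = C * ((1 + t) ^ k * Real.exp (-a * t ^ 2 + (2 * Real.pi * g * R) * t)) := by ring

lemma summable_fT (τ : Matrix (Fin g) (Fin g) ℂ) (ε : Fin g → ℤ) {a : ℝ} (ha : 0 < a)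
    (hqa : ∀ n, (qA τ ε n).re ≤ -a * ‖rv ε n‖ ^ 2)
    {p : (Fin g → ℤ) → ℂ} {C : ℝ} {k : ℕ}
    (hp : ∀ n, ‖p n‖ ≤ C * (1 + ‖rv ε n‖) ^ k) (z : Fin g → ℂ) :
    Summable fun n => fT τ ε p n z := by
  apply Summable.of_norm
  apply Summable.of_nonneg_of_le (fun n => norm_nonneg _)
    (fun n => norm_fT_le τ ε hqa hp n (le_refl ‖z‖))
  exact (key1 ε ha _ k (hpi_all g)).mul_left C

lemma hasFDerivAt_fT (τ : Matrix (Fin g) (Fin g) ℂ) (ε : Fin g → ℤ)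
    (p : (Fin g → ℤ) → ℂ) (n : Fin g → ℤ) (x : Fin g → ℂ) :
    HasFDerivAt (fun z => fT τ ε p n z) ((fT τ ε p n x) • Lc ε n) x := by
  have h1 : HasFDerivAt (fun z : Fin g → ℂ => qA τ ε n + bL ε n z) (Lc ε n) x := by
    have h0 : HasFDerivAt (fun z : Fin g → ℂ => (Lc ε n) z) (Lc ε n) x :=
      (Lc ε n).hasFDerivAt
    have h2 := h0.const_add (qA τ ε n)
    have heq : (fun z : Fin g → ℂ => qA τ ε n + (Lc ε n) z)
        = fun z : Fin g → ℂ => qA τ ε n + bL ε n z := by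
      funext z; rw [Lc_apply]
    rwa [heq] at h2
  have h2 := h1.cexp
  have h3 := h2.const_mul (p n)
  have heq : (fun z : Fin g → ℂ => p n * Complex.exp (qA τ ε n + bL ε n z))
      = fun z => fT τ ε p n z := by
    funext z; rw [fT]
  rw [heq] at h3
  have : p n • Complex.exp (qA τ ε n + bL ε n x) • Lc ε n = (fT τ ε p n x) • Lc ε n := by
    rw [smul_smul, fT]
  rwa [this] at h3




lemma C_nonneg {ε : Fin g → ℤ} {p : (Fin g → ℤ) → ℂ} {C : ℝ} {k : ℕ}
    (hp : ∀ n, ‖p n‖ ≤ C * (1 + ‖rv ε n‖) ^ k) : 0 ≤ C := by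
  have := (norm_nonneg (p (fun _ => 0))).trans (hp (fun _ => 0))
  nlinarith [pow_pos (by positivity : (0:ℝ) < 1 + ‖rv ε (fun _ => 0)‖) k]

lemma tame_mul_bL {ε : Fin g → ℤ} {p : (Fin g → ℤ) → ℂ} {C : ℝ} {k : ℕ}
    (hp : ∀ n, ‖p n‖ ≤ C * (1 + ‖rv ε n‖) ^ k) (U : Fin g → ℂ) :
    ∀ n, ‖p n * bL ε n U‖ ≤ (C * (2 * Real.pi * g * ‖U‖)) * (1 + ‖rv ε n‖) ^ (k + 1) := by
  intro n
  set t : ℝ := ‖rv ε n‖ with ht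
  have ht0 : 0 ≤ t := norm_nonneg _
  have hC0 : 0 ≤ C := C_nonneg hp
  rw [norm_mul]
  calc ‖p n‖ * ‖bL ε n U‖ ≤ (C * (1 + t) ^ k) * (2 * Real.pi * g * t * ‖U‖) := by
        apply mul_le_mul (hp n) _ (norm_nonneg _) (by positivity)
        rw [show (2:ℝ) * Real.pi * g * t * ‖U‖ = 2 * Real.pi * (g:ℝ) * ‖rv ε n‖ * ‖U‖ by rw [ht]]
        exact norm_bL_le ε n U
    _ = (C * (2 * Real.pi * g * ‖U‖)) * ((1 + t) ^ k * t) := by ring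
    _ ≤ (C * (2 * Real.pi * g * ‖U‖)) * ((1 + t) ^ k * (1 + t)) := by
        have h1 : t ≤ 1 + t := by linarith
        have hP : (0:ℝ) ≤ (1 + t) ^ k := pow_nonneg (by linarith) k
        apply mul_le_mul_of_nonneg_left (mul_le_mul_of_nonneg_left h1 hP) (by positivity)
    _ = (C * (2 * Real.pi * g * ‖U‖)) * (1 + t) ^ (k + 1) := by rw [← pow_succ]

lemma summable_smul_Lc (τ : Matrix (Fin g) (Fin g) ℂ) (ε : Fin g → ℤ) {a : ℝ} (ha : 0 < a)
    (hqa : ∀ n, (qA τ ε n).re ≤ -a * ‖rv ε n‖ ^ 2)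
    {p : (Fin g → ℤ) → ℂ} {C : ℝ} {k : ℕ}
    (hp : ∀ n, ‖p n‖ ≤ C * (1 + ‖rv ε n‖) ^ k) {z : Fin g → ℂ} {R : ℝ} (hz : ‖z‖ ≤ R) :
    ∀ n, ‖fT τ ε p n z • Lc ε n‖ ≤ (C * (2 * Real.pi * g)) *
      ((1 + ‖rv ε n‖) ^ (k + 1) *
        Real.exp (-a * ‖rv ε n‖ ^ 2 + (2 * Real.pi * g * R) * ‖rv ε n‖)) := by
  intro n
  set t : ℝ := ‖rv ε n‖ with ht
  have ht0 : 0 ≤ t := norm_nonneg _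
  have hC0 : 0 ≤ C := C_nonneg hp
  rw [norm_smul (fT τ ε p n z) (Lc ε n)]
  calc ‖fT τ ε p n z‖ * ‖Lc ε n‖
      ≤ (C * ((1 + t) ^ k * Real.exp (-a * t ^ 2 + (2 * Real.pi * g * R) * t)))
        * (2 * Real.pi * g * t) := by
        apply mul_le_mul (norm_fT_le τ ε hqa hp n hz) _ (norm_nonneg _) (by positivity)
        exact norm_Lc_le ε n
    _ = (C * (2 * Real.pi * g)) * (((1 + t) ^ k * t)
        * Real.exp (-a * t ^ 2 + (2 * Real.pi * g * R) * t)) := by ring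
    _ ≤ (C * (2 * Real.pi * g)) * (((1 + t) ^ k * (1 + t))
        * Real.exp (-a * t ^ 2 + (2 * Real.pi * g * R) * t)) := by
        have h1 : t ≤ 1 + t := by linarith
        have hP : (0:ℝ) ≤ (1 + t) ^ k := pow_nonneg (by linarith) k
        have hE : (0:ℝ) ≤ Real.exp (-a * t ^ 2 + (2 * Real.pi * g * R) * t) :=
          le_of_lt (Real.exp_pos _)
        apply mul_le_mul_of_nonneg_left _ (by positivity)
        exact mul_le_mul_of_nonneg_right (mul_le_mul_of_nonneg_left h1 hP) hE
    _ = (C * (2 * Real.pi * g)) * ((1 + t) ^ (k + 1)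
        * Real.exp (-a * t ^ 2 + (2 * Real.pi * g * R) * t)) := by rw [← pow_succ]

lemma hasFDerivAt_G (τ : Matrix (Fin g) (Fin g) ℂ) (ε : Fin g → ℤ) {a : ℝ} (ha : 0 < a)
    (hqa : ∀ n, (qA τ ε n).re ≤ -a * ‖rv ε n‖ ^ 2)
    {p : (Fin g → ℤ) → ℂ} {C : ℝ} {k : ℕ}
    (hp : ∀ n, ‖p n‖ ≤ C * (1 + ‖rv ε n‖) ^ k) (z : Fin g → ℂ) :
    HasFDerivAt (G τ ε p) (∑' n, fT τ ε p n z • Lc ε n) z := by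
  set R : ℝ := ‖z‖ + 1 with hR
  have hzball : z ∈ Metric.ball (0 : Fin g → ℂ) R := by
    simp [hR, Metric.mem_ball, dist_eq_norm]
  apply hasFDerivAt_tsum_of_isPreconnected
    (u := fun n => (C * (2 * Real.pi * g)) * ((1 + ‖rv ε n‖) ^ (k + 1) *
      Real.exp (-a * ‖rv ε n‖ ^ 2 + (2 * Real.pi * g * R) * ‖rv ε n‖)))
    (f := fun n z => fT τ ε p n z) (f' := fun n x => fT τ ε p n x • Lc ε n)
    ?_ Metric.isOpen_ball (convex_ball _ _).isPreconnected
    (fun n x _ => hasFDerivAt_fT τ ε p n x) ?_ hzball (summable_fT τ ε ha hqa hp z) hzball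
  · exact ((key1 ε ha _ (k+1) (hpi_all g)).mul_left _)
  · intro n x hx
    apply summable_smul_Lc τ ε ha hqa hp
    have := Metric.mem_ball.mp hx
    rw [dist_eq_norm, sub_zero] at this
    linarith

lemma dd_G (τ : Matrix (Fin g) (Fin g) ℂ) (ε : Fin g → ℤ) {a : ℝ} (ha : 0 < a)
    (hqa : ∀ n, (qA τ ε n).re ≤ -a * ‖rv ε n‖ ^ 2)
    {p : (Fin g → ℤ) → ℂ} {C : ℝ} {k : ℕ}
    (hp : ∀ n, ‖p n‖ ≤ C * (1 + ‖rv ε n‖) ^ k) (U z : Fin g → ℂ) :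
    dd U (G τ ε p) z = G τ ε (fun n => p n * bL ε n U) z := by
  have h := hasFDerivAt_G τ ε ha hqa hp z
  rw [dd, h.fderiv]
  have hs : Summable fun n => fT τ ε p n z • Lc ε n := by
    apply Summable.of_norm
    apply Summable.of_nonneg_of_le (fun n => norm_nonneg _)
      (summable_smul_Lc τ ε ha hqa hp (le_refl ‖z‖))
    exact (key1 ε ha _ (k+1) (hpi_all g)).mul_left _
  have happ := (ContinuousLinearMap.apply ℂ ℂ U).map_tsum hs
  calc (∑' n, fT τ ε p n z • Lc ε n) U
      = (ContinuousLinearMap.apply ℂ ℂ U) (∑' n, fT τ ε p n z • Lc ε n) := rfl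
    _ = ∑' n, (ContinuousLinearMap.apply ℂ ℂ U) (fT τ ε p n z • Lc ε n) := happ
    _ = G τ ε (fun n => p n * bL ε n U) z := by
        rw [G]
        apply tsum_congr
        intro n
        show (fT τ ε p n z • Lc ε n) U = _
        rw [ContinuousLinearMap.smul_apply, Lc_apply, smul_eq_mul, fT, fT]
        ring




noncomputable def Sval (τ : Matrix (Fin g) (Fin g) ℂ) (ε : Fin g → ℤ)
    (p : (Fin g → ℤ) → ℂ) : ℂ :=
  ∑' n, p n * Complex.exp (qA τ ε n)

lemma bL_zero (ε : Fin g → ℤ) (n : Fin g → ℤ) : bL ε n 0 = 0 := by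
  simp [bL]

lemma G_zero (τ : Matrix (Fin g) (Fin g) ℂ) (ε : Fin g → ℤ) (p : (Fin g → ℤ) → ℂ) :
    G τ ε p 0 = Sval τ ε p := by
  rw [G, Sval]
  exact tsum_congr fun n => by rw [fT, bL_zero, add_zero]

lemma summable_Sval (τ : Matrix (Fin g) (Fin g) ℂ) (ε : Fin g → ℤ) {a : ℝ} (ha : 0 < a)
    (hqa : ∀ n, (qA τ ε n).re ≤ -a * ‖rv ε n‖ ^ 2)
    {p : (Fin g → ℤ) → ℂ} {C : ℝ} {k : ℕ}
    (hp : ∀ n, ‖p n‖ ≤ C * (1 + ‖rv ε n‖) ^ k) :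
    Summable fun n => p n * Complex.exp (qA τ ε n) := by
  have := summable_fT τ ε ha hqa hp 0
  apply this.congr
  intro n
  rw [fT, bL_zero, add_zero]

lemma bL_single (ε : Fin g → ℤ) (n : Fin g → ℤ) (i : Fin g) :
    bL ε n (Pi.single i 1) = 2 * (Real.pi : ℂ) * Complex.I * mv ε n i := by
  rw [bL]
  congr 1
  rw [Finset.sum_eq_single i]
  · simp
  · intro b _ hb
    simp [Pi.single_apply, hb]
  · intro h; exact absurd (Finset.mem_univ i) h

lemma bL_expand (ε : Fin g → ℤ) (n : Fin g → ℤ) (X : Fin g → ℂ) :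
    bL ε n X = ∑ i, X i * bL ε n (Pi.single i 1) := by
  rw [bL, Finset.mul_sum]
  exact Finset.sum_congr rfl fun i _ => by rw [bL_single]; ring

/-- tame bound for `bL · X` alone -/
lemma tame_bL (ε : Fin g → ℤ) (X : Fin g → ℂ) (n : Fin g → ℤ) :
    ‖bL ε n X‖ ≤ (2 * Real.pi * g * ‖X‖) * (1 + ‖rv ε n‖) ^ 1 := by
  have h := norm_bL_le ε n X
  have ht0 : (0:ℝ) ≤ ‖rv ε n‖ := norm_nonneg _
  calc ‖bL ε n X‖ ≤ 2 * Real.pi * g * ‖rv ε n‖ * ‖X‖ := h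
    _ ≤ (2 * Real.pi * g * ‖X‖) * (1 + ‖rv ε n‖) ^ 1 := by
        rw [pow_one]
        have hx : (0:ℝ) ≤ 2 * Real.pi * (g:ℝ) * ‖X‖ := by positivity
        nlinarith [hx]

/-- tame bound for products `bL e_i * q` -/
lemma tame_bL_mul {ε : Fin g → ℤ} {q : (Fin g → ℤ) → ℂ} {C : ℝ} {k : ℕ}
    (hq : ∀ n, ‖q n‖ ≤ C * (1 + ‖rv ε n‖) ^ k) (X : Fin g → ℂ) :
    ∀ n, ‖bL ε n X * q n‖ ≤ (C * (2 * Real.pi * g * ‖X‖)) * (1 + ‖rv ε n‖) ^ (k + 1) := by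
  intro n
  have := tame_mul_bL hq X n
  calc ‖bL ε n X * q n‖ = ‖q n * bL ε n X‖ := by rw [mul_comm]
    _ ≤ _ := this

/-- Linear expansion of `Sval` in the `bL` factor. -/
lemma Sval_expand (τ : Matrix (Fin g) (Fin g) ℂ) (ε : Fin g → ℤ) {a : ℝ} (ha : 0 < a)
    (hqa : ∀ n, (qA τ ε n).re ≤ -a * ‖rv ε n‖ ^ 2)
    {q : (Fin g → ℤ) → ℂ} {C : ℝ} {k : ℕ}
    (hq : ∀ n, ‖q n‖ ≤ C * (1 + ‖rv ε n‖) ^ k) (X : Fin g → ℂ) :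
    Sval τ ε (fun n => bL ε n X * q n)
      = ∑ i, X i * Sval τ ε (fun n => bL ε n (Pi.single i 1) * q n) := by
  rw [Sval]
  have h1 : ∀ n : Fin g → ℤ, bL ε n X * q n * Complex.exp (qA τ ε n)
      = ∑ i, X i * (bL ε n (Pi.single i 1) * q n * Complex.exp (qA τ ε n)) := by
    intro n
    rw [bL_expand ε n X, Finset.sum_mul, Finset.sum_mul]
    exact Finset.sum_congr rfl fun i _ => by ring
  calc ∑' n, bL ε n X * q n * Complex.exp (qA τ ε n)
      = ∑' n, ∑ i, X i * (bL ε n (Pi.single i 1) * q n * Complex.exp (qA τ ε n)) :=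
        tsum_congr h1
    _ = ∑ i, ∑' n, X i * (bL ε n (Pi.single i 1) * q n * Complex.exp (qA τ ε n)) := by
        apply Summable.tsum_finsetSum
        intro i _
        exact (summable_Sval τ ε ha hqa (tame_bL_mul hq (Pi.single i 1))).mul_left (X i)
    _ = ∑ i, X i * Sval τ ε (fun n => bL ε n (Pi.single i 1) * q n) := by
        refine Finset.sum_congr rfl fun i _ => ?_
        rw [tsum_mul_left, Sval]




lemma thetaHat_eq_G (τ : Matrix (Fin g) (Fin g) ℂ) (ε : Fin g → ℤ) :
    thetaHat τ ε = G τ ε (fun _ => 1) := by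
  funext z
  exact thetaHat_eq τ ε z

lemma tame_one (ε : Fin g → ℤ) : ∀ n, ‖(fun _ : Fin g → ℤ => (1:ℂ)) n‖ ≤
    (1:ℝ) * (1 + ‖rv ε n‖) ^ 0 := by
  intro n; simp

/-- first derivative of theta -/
lemma dd_theta (τ : Matrix (Fin g) (Fin g) ℂ) (ε : Fin g → ℤ) {a : ℝ} (ha : 0 < a)
    (hqa : ∀ n, (qA τ ε n).re ≤ -a * ‖rv ε n‖ ^ 2) (W : Fin g → ℂ) :
    dd W (thetaHat τ ε) = fun z => G τ ε (fun n => bL ε n W) z := by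
  funext z
  rw [thetaHat_eq_G]
  rw [dd_G τ ε ha hqa (tame_one ε) W z]
  rw [G, G]
  exact tsum_congr fun n => by rw [fT, fT, one_mul]

/-- second derivative of theta at 0 -/
lemma dd_dd_theta (τ : Matrix (Fin g) (Fin g) ℂ) (ε : Fin g → ℤ) {a : ℝ} (ha : 0 < a)
    (hqa : ∀ n, (qA τ ε n).re ≤ -a * ‖rv ε n‖ ^ 2) (U W : Fin g → ℂ) :
    dd U (dd W (thetaHat τ ε)) 0 = Sval τ ε (fun n => bL ε n W * bL ε n U) := by
  rw [dd_theta τ ε ha hqa W]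
  have hW : ∀ n, ‖bL ε n W‖ ≤ (2 * Real.pi * g * ‖W‖) * (1 + ‖rv ε n‖) ^ 1 := tame_bL ε W
  show dd U (G τ ε fun n => bL ε n W) 0 = _
  rw [dd_G τ ε ha hqa hW U 0, G_zero]

/-- hessQ in terms of Sval -/
lemma hessQ_eq (τ : Matrix (Fin g) (Fin g) ℂ) (ε : Fin g → ℤ) {a : ℝ} (ha : 0 < a)
    (hqa : ∀ n, (qA τ ε n).re ≤ -a * ‖rv ε n‖ ^ 2) (i j : Fin g) :
    hessQ τ ε i j = Sval τ ε (fun n =>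
      bL ε n (Pi.single j 1) * bL ε n (Pi.single i 1)) := by
  rw [hessQ]
  exact dd_dd_theta τ ε ha hqa (Pi.single i 1) (Pi.single j 1)

lemma hessQ_symm (τ : Matrix (Fin g) (Fin g) ℂ) (ε : Fin g → ℤ) {a : ℝ} (ha : 0 < a)
    (hqa : ∀ n, (qA τ ε n).re ≤ -a * ‖rv ε n‖ ^ 2) (i j : Fin g) :
    hessQ τ ε i j = hessQ τ ε j i := by
  rw [hessQ_eq τ ε ha hqa, hessQ_eq τ ε ha hqa, Sval, Sval]
  exact tsum_congr fun n => by ring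

/-- The key formula: second directional derivatives expand through the Hessian. -/
lemma dd_dd_theta_expand (τ : Matrix (Fin g) (Fin g) ℂ) (ε : Fin g → ℤ) {a : ℝ} (ha : 0 < a)
    (hqa : ∀ n, (qA τ ε n).re ≤ -a * ‖rv ε n‖ ^ 2) (U W : Fin g → ℂ) :
    dd U (dd W (thetaHat τ ε)) 0 = ∑ i, W i * ∑ j, U j * hessQ τ ε i j := by
  rw [dd_dd_theta τ ε ha hqa U W]
  have hU : ∀ n, ‖bL ε n U‖ ≤ (2 * Real.pi * g * ‖U‖) * (1 + ‖rv ε n‖) ^ 1 := tame_bL ε U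
  rw [Sval_expand τ ε ha hqa hU W]
  refine Finset.sum_congr rfl fun i _ => ?_
  congr 1
  have hcomm : Sval τ ε (fun n => bL ε n (Pi.single i 1) * bL ε n U)
      = Sval τ ε (fun n => bL ε n U * bL ε n (Pi.single i 1)) := by
    rw [Sval, Sval]; exact tsum_congr fun n => by ring
  rw [hcomm]
  have hei : ∀ n, ‖bL ε n (Pi.single i 1)‖ ≤
      (2 * Real.pi * g * ‖(Pi.single i 1 : Fin g → ℂ)‖) * (1 + ‖rv ε n‖) ^ 1 :=
    tame_bL ε (Pi.single i 1)
  rw [Sval_expand τ ε ha hqa hei U]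
  refine Finset.sum_congr rfl fun j _ => ?_
  congr 1
  rw [hessQ_eq τ ε ha hqa i j]


end DubAux

/-- A linear combination `∑_ε λ_ε F[ε]` of the Dubrovin quartics is
independent of `c` and `d` if and only if `∑_ε λ_ε Q[ε] = 0` and
`∑_ε λ_ε θ̂[ε](0) = 0`; moreover, in that case the combination equals
`∑_ε λ_ε ∂_U⁴θ̂[ε](0)`, a quartic in `U` alone. -/
theorem dubrovin_combination_independent_iff (g : ℕ) (hg : 0 < g)
    (τ : Matrix (Fin g) (Fin g) ℂ) (hsym : τ.IsSymm)
    (hpos : (Matrix.of fun i j => (τ i j).im).PosDef)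
    (lam : (Fin g → Fin 2) → ℂ) :
    ((∀ (U V W : Fin g → ℂ) (c₁ d₁ c₂ d₂ : ℂ),
        (∑ ε : Fin g → Fin 2,
            lam ε * dubrovinQuartic τ (fun i => ((ε i : ℕ) : ℤ)) U V W c₁ d₁) =
          ∑ ε : Fin g → Fin 2,
            lam ε * dubrovinQuartic τ (fun i => ((ε i : ℕ) : ℤ)) U V W c₂ d₂) ↔
      ((∀ i j : Fin g,
          (∑ ε : Fin g → Fin 2, lam ε * hessQ τ (fun i => ((ε i : ℕ) : ℤ)) i j) = 0) ∧
        (∑ ε : Fin g → Fin 2, lam ε * thetaHat τ (fun i => ((ε i : ℕ) : ℤ)) 0) = 0)) ∧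
    (((∀ i j : Fin g,
          (∑ ε : Fin g → Fin 2, lam ε * hessQ τ (fun i => ((ε i : ℕ) : ℤ)) i j) = 0) ∧
        (∑ ε : Fin g → Fin 2, lam ε * thetaHat τ (fun i => ((ε i : ℕ) : ℤ)) 0) = 0) →
      ∀ (U V W : Fin g → ℂ) (c d : ℂ),
        (∑ ε : Fin g → Fin 2,
            lam ε * dubrovinQuartic τ (fun i => ((ε i : ℕ) : ℤ)) U V W c d) =
          ∑ ε : Fin g → Fin 2,
            lam ε * (dd U)^[4] (thetaHat τ (fun i => ((ε i : ℕ) : ℤ))) 0) := by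
  classical
  obtain ⟨c₀, hc₀, hc⟩ := DubAux.posdef_bound hg (Matrix.of fun i j => (τ i j).im) hpos
  set a : ℝ := 2 * Real.pi * c₀ with haDef
  have ha : 0 < a := by
    have := Real.pi_pos
    positivity
  have hqa : ∀ ε : Fin g → ℤ, ∀ n, (DubAux.qA τ ε n).re ≤ -a * ‖DubAux.rv ε n‖ ^ 2 := by
    intro ε n
    rw [DubAux.re_qA]
    have h1 : c₀ * ‖DubAux.rv ε n‖ ^ 2
        ≤ ∑ i, ∑ j, DubAux.rv ε n i * (τ i j).im * DubAux.rv ε n j := by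
      simpa using hc (DubAux.rv ε n)
    have h2 := mul_le_mul_of_nonneg_left h1 (by positivity : (0:ℝ) ≤ 2 * Real.pi)
    rw [haDef]
    nlinarith [h2]
  have hKey : ∀ (ε : Fin g → ℤ) (U W : Fin g → ℂ),
      dd U (dd W (thetaHat τ ε)) 0 = ∑ i, W i * ∑ j, U j * hessQ τ ε i j :=
    fun ε U W => DubAux.dd_dd_theta_expand τ ε ha (hqa ε) U W
  have hSymm : ∀ (ε : Fin g → ℤ) (i j : Fin g), hessQ τ ε i j = hessQ τ ε j i :=
    fun ε i j => DubAux.hessQ_symm τ ε ha (hqa ε) i j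
  set S : Fin g → Fin g → ℂ :=
    fun i j => ∑ ε : Fin g → Fin 2, lam ε * hessQ τ (fun i => ((ε i : ℕ) : ℤ)) i j with hS
  set T0 : ℂ := ∑ ε : Fin g → Fin 2, lam ε * thetaHat τ (fun i => ((ε i : ℕ) : ℤ)) 0 with hT0
  set B : (Fin g → ℂ) → (Fin g → ℂ) → ℂ :=
    fun X Y => ∑ i, X i * ∑ j, Y j * S i j with hB
  have hswap : ∀ (F : (Fin g → Fin 2) → Fin g → Fin g → ℂ) (X Y : Fin g → ℂ),
      (∑ e : Fin g → Fin 2, lam e * ∑ i, X i * ∑ j, Y j * F e i j)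
        = ∑ i, X i * ∑ j, Y j * (∑ e : Fin g → Fin 2, lam e * F e i j) := by
    intro F X Y
    simp only [Finset.mul_sum]
    rw [Finset.sum_comm]
    refine Finset.sum_congr rfl fun i _ => ?_
    rw [Finset.sum_comm]
    exact Finset.sum_congr rfl fun j _ => Finset.sum_congr rfl fun e _ => by ring
  have hAgg : ∀ (U V W : Fin g → ℂ) (c d : ℂ),
      (∑ ε : Fin g → Fin 2, lam ε * dubrovinQuartic τ (fun i => ((ε i : ℕ) : ℤ)) U V W c d)
        = (∑ ε : Fin g → Fin 2, lam ε * (dd U)^[4] (thetaHat τ (fun i => ((ε i : ℕ) : ℤ))) 0)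
          - B W U + (3/2) * c * B U U + (3/4) * B V V + d * T0 := by
    intro U V W c d
    have hsplit : ∀ ε : Fin g → Fin 2,
        lam ε * dubrovinQuartic τ (fun i => ((ε i : ℕ) : ℤ)) U V W c d
          = lam ε * (dd U)^[4] (thetaHat τ (fun i => ((ε i : ℕ) : ℤ))) 0
            - lam ε * (∑ i, W i * ∑ j, U j * hessQ τ (fun i => ((ε i : ℕ) : ℤ)) i j)
            + (3/2) * c * (lam ε * ∑ i, U i * ∑ j, U j * hessQ τ (fun i => ((ε i : ℕ) : ℤ)) i j)
            + (3/4) * (lam ε * ∑ i, V i * ∑ j, V j * hessQ τ (fun i => ((ε i : ℕ) : ℤ)) i j)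
            + d * (lam ε * thetaHat τ (fun i => ((ε i : ℕ) : ℤ)) 0) := by
      intro ε
      have e2 : (dd U)^[2] (thetaHat τ (fun i => ((ε i : ℕ) : ℤ))) 0
          = dd U (dd U (thetaHat τ (fun i => ((ε i : ℕ) : ℤ)))) 0 := rfl
      have e2' : (dd V)^[2] (thetaHat τ (fun i => ((ε i : ℕ) : ℤ))) 0
          = dd V (dd V (thetaHat τ (fun i => ((ε i : ℕ) : ℤ)))) 0 := rfl
      rw [dubrovinQuartic, e2, e2', hKey _ U W, hKey _ U U, hKey _ V V]
      ring
    rw [Finset.sum_congr rfl (fun ε _ => hsplit ε)]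
    rw [Finset.sum_add_distrib, Finset.sum_add_distrib, Finset.sum_add_distrib,
      Finset.sum_sub_distrib]
    rw [← Finset.mul_sum, ← Finset.mul_sum, ← Finset.mul_sum]
    rw [hswap, hswap, hswap]
  have hBe : ∀ a b : Fin g, B (Pi.single a 1) (Pi.single b 1) = S a b := by
    intro i0 j0
    show (∑ i, (Pi.single i0 1 : Fin g → ℂ) i * ∑ j, (Pi.single j0 1 : Fin g → ℂ) j * S i j)
      = S i0 j0
    rw [Finset.sum_eq_single_of_mem i0 (Finset.mem_univ i0)]
    · rw [Finset.sum_eq_single_of_mem j0 (Finset.mem_univ j0)]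
      · rw [Pi.single_eq_same, Pi.single_eq_same, one_mul, one_mul]
      · intro b _ hb
        rw [Pi.single_eq_of_ne hb, zero_mul]
    · intro b _ hb
      rw [Pi.single_eq_of_ne hb, zero_mul]
  have hSsymm : ∀ i j : Fin g, S i j = S j i := by
    intro i j
    rw [hS]
    exact Finset.sum_congr rfl fun e _ => by rw [hSymm]
  have hBadd : ∀ X Y : Fin g → ℂ,
      B (X + Y) (X + Y) = B X X + B X Y + B Y X + B Y Y := by
    intro X Y
    show (∑ i, (X + Y) i * ∑ j, (X + Y) j * S i j) = _
    simp only [Pi.add_apply, add_mul, Finset.sum_add_distrib, mul_add]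
    show _ = (∑ i, X i * ∑ j, X j * S i j) + (∑ i, X i * ∑ j, Y j * S i j)
      + (∑ i, Y i * ∑ j, X j * S i j) + (∑ i, Y i * ∑ j, Y j * S i j)
    ring
  constructor
  · constructor
    · intro h
      have hT0z : T0 = 0 := by
        have e := h 0 0 0 0 1 0 0
        rw [hAgg, hAgg] at e
        linear_combination e
      have hBUU : ∀ U : Fin g → ℂ, B U U = 0 := by
        intro U
        have e := h U 0 0 1 0 0 0
        rw [hAgg, hAgg] at e
        linear_combination (2/3 : ℂ) * e
      refine ⟨?_, hT0z⟩
      intro i j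
      show S i j = 0
      have haa : S i i = 0 := by rw [← hBe i i]; exact hBUU _
      have hbb : S j j = 0 := by rw [← hBe j j]; exact hBUU _
      have hab := hBUU (Pi.single i 1 + Pi.single j 1)
      rw [hBadd, hBe, hBe, hBe, hBe, haa, hbb, hSsymm j i] at hab
      linear_combination (1/2 : ℂ) * hab
    · rintro ⟨hQ, hθ⟩ U V W c₁ d₁ c₂ d₂
      have hBz : ∀ X Y : Fin g → ℂ, B X Y = 0 := by
        intro X Y
        show (∑ i, X i * ∑ j, Y j * S i j) = 0
        have hSz : ∀ i j : Fin g, S i j = 0 := hQ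
        simp [hSz]
      rw [hAgg, hAgg]
      simp only [hBz, hθ]
      ring
  · rintro ⟨hQ, hθ⟩ U V W c d
    have hBz : ∀ X Y : Fin g → ℂ, B X Y = 0 := by
      intro X Y
      show (∑ i, X i * ∑ j, Y j * S i j) = 0
      have hSz : ∀ i j : Fin g, S i j = 0 := hQ
      simp [hSz]
    rw [hAgg]
    simp only [hBz, hθ]
    ring
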